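/- arXiv:1107.2406 — 8 statements merged into one kernel-verified Lean document; each statement's English description precedes it below -/
import Mathlib

section
/- Let N ≥ 1 and let P₀,...,P_N be polynomials over a field K with P_n(0) = p_{n,0}, and let a = ∑ a_k z^k be a formal power series with constant term a₀ = f₀. If C := ∑_{n=1}^N n · p_{n,0} · f₀^{n-1} ≠ 0, then the map sending a to the formal power series ∑_{n=0}^N P_n · aⁿ has the property that the coefficient of z^J in ∑_{n=0}^N P_n · aⁿ equals C · a_J + D_J, where D_J depends only on a₀,...,a_{J-1} (i.e., D_J is the coefficient of z^J of ∑_{n=0}^N P_n · (truncation of a below degree J)ⁿ). -/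
open PowerSeries Finset

theorem coeff_decomposition (K : Type*) [Field K] (N : ℕ) (hN : 1 ≤ N)
    (P : ℕ → Polynomial K) (a : PowerSeries K) (f₀ : K)
    (ha0 : PowerSeries.constantCoeff a = f₀)
    (C : K) (hC : C = ∑ n ∈ Finset.range (N + 1), (n : K) * (P n).coeff 0 * f₀ ^ (n - 1))
    (hCne : C ≠ 0) (J : ℕ) (hJ : 1 ≤ J) :
    PowerSeries.coeff J (∑ n ∈ Finset.range (N + 1), (P n : PowerSeries K) * a ^ n) =
      C * PowerSeries.coeff J a +
        PowerSeries.coeff J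
          (∑ n ∈ Finset.range (N + 1),
            (P n : PowerSeries K) * ((a.trunc J : Polynomial K) : PowerSeries K) ^ n) := by
  set t : PowerSeries K := ((a.trunc J : Polynomial K) : PowerSeries K) with ht
  have htc : ∀ k, k < J → PowerSeries.coeff k t = PowerSeries.coeff k a := by
    intro k hk
    simp [ht, Polynomial.coeff_coe, coeff_trunc, hk]
  have htJ : PowerSeries.coeff J t = 0 := by
    simp [ht, Polynomial.coeff_coe, coeff_trunc]
  have hdvd : (X : PowerSeries K) ^ J ∣ (a - t) := by
    rw [PowerSeries.X_pow_dvd_iff]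
    intro m hm
    simp [map_sub, htc m hm]
  obtain ⟨s, hs⟩ := hdvd
  have hs0 : PowerSeries.constantCoeff s = PowerSeries.coeff J a := by
    have h := congrArg (PowerSeries.coeff J) hs
    rw [map_sub, htJ, sub_zero] at h
    have h2 : PowerSeries.coeff J ((X : PowerSeries K) ^ J * s)
        = PowerSeries.coeff 0 s := by
      simpa using PowerSeries.coeff_X_pow_mul s J 0
    rw [h2] at h
    rw [← PowerSeries.coeff_zero_eq_constantCoeff]
    exact h.symm
  have ht0 : PowerSeries.constantCoeff t = f₀ := by
    have h := htc 0 hJ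
    rw [PowerSeries.coeff_zero_eq_constantCoeff] at h
    rw [h, ha0]
  have key : ∀ n, PowerSeries.coeff J ((P n : PowerSeries K) * a ^ n)
      = (n : K) * (P n).coeff 0 * f₀ ^ (n - 1) * PowerSeries.coeff J a
        + PowerSeries.coeff J ((P n : PowerSeries K) * t ^ n) := by
    intro n
    have hdiff : a ^ n - t ^ n = (∑ i ∈ Finset.range n, a ^ i * t ^ (n - 1 - i)) * (a - t) :=
      (geom_sum₂_mul a t n).symm
    have hfac : (P n : PowerSeries K) * a ^ n - (P n : PowerSeries K) * t ^ n
        = (X : PowerSeries K) ^ J *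
          ((P n : PowerSeries K) * (∑ i ∈ Finset.range n, a ^ i * t ^ (n - 1 - i)) * s) := by
      rw [← mul_sub, hdiff, hs]; ring
    have h2 := congrArg (PowerSeries.coeff J) hfac
    rw [map_sub] at h2
    have h3 : PowerSeries.coeff J ((X : PowerSeries K) ^ J *
          ((P n : PowerSeries K) * (∑ i ∈ Finset.range n, a ^ i * t ^ (n - 1 - i)) * s))
        = PowerSeries.constantCoeff
          ((P n : PowerSeries K) * (∑ i ∈ Finset.range n, a ^ i * t ^ (n - 1 - i)) * s) := by
      rw [← PowerSeries.coeff_zero_eq_constantCoeff]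
      simpa using PowerSeries.coeff_X_pow_mul
        ((P n : PowerSeries K) * (∑ i ∈ Finset.range n, a ^ i * t ^ (n - 1 - i)) * s) J 0
    have h4 : PowerSeries.constantCoeff
          ((P n : PowerSeries K) * (∑ i ∈ Finset.range n, a ^ i * t ^ (n - 1 - i)) * s)
        = (P n).coeff 0 * ((n : K) * f₀ ^ (n - 1)) * PowerSeries.coeff J a := by
      rw [map_mul, map_mul, map_sum, hs0, Polynomial.constantCoeff_coe]
      have hsum : ∑ i ∈ Finset.range n, PowerSeries.constantCoeff (a ^ i * t ^ (n - 1 - i))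
          = (n : K) * f₀ ^ (n - 1) := by
        have hterm : ∀ i ∈ Finset.range n,
            PowerSeries.constantCoeff (a ^ i * t ^ (n - 1 - i)) = f₀ ^ (n - 1) := by
          intro i hi
          rw [map_mul, map_pow, map_pow, ha0, ht0, ← pow_add]
          congr 1
          have := Finset.mem_range.mp hi
          omega
        rw [Finset.sum_congr rfl hterm, Finset.sum_const, Finset.card_range, nsmul_eq_mul]
      rw [hsum]
    rw [h3, h4] at h2
    linear_combination h2
  rw [map_sum, map_sum]
  rw [Finset.sum_congr rfl (fun n _ => key n), Finset.sum_add_distrib]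
  congr 1
  rw [← Finset.sum_mul, hC]
end

section
/- Let N ≥ 1, let P₀,...,P_N ∈ K[z] and let f ∈ K⟦z⟧ satisfy the order condition ∑_{n=0}^N P_n fⁿ ≡ 0 mod z^M for some M. Suppose C := ∑_{n=1}^N n P_n(0) f(0)^{n-1} ≠ 0, and let a ∈ K⟦z⟧ be the unique power series root of ∑_{n=0}^N P_n Yⁿ = 0 with a(0) = f(0). Then a ≡ f mod z^M, i.e., the coefficients of a agree with those of f up to order M−1. -/
theorem approximant_agrees_with_f (K : Type*) [Field K] (N : ℕ) (hN : 1 ≤ N)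
    (P : ℕ → Polynomial K) (f : PowerSeries K) (M : ℕ)
    (horder : ∀ m < M, PowerSeries.coeff m
      (∑ n ∈ Finset.range (N + 1), (P n : PowerSeries K) * f ^ n) = 0)
    (hC : ∑ n ∈ Finset.range (N + 1),
      (n : K) * (P n).coeff 0 * (PowerSeries.constantCoeff f) ^ (n - 1) ≠ 0)
    (a : PowerSeries K)
    (ha0 : PowerSeries.constantCoeff a = PowerSeries.constantCoeff f)
    (ha : ∑ n ∈ Finset.range (N + 1), (P n : PowerSeries K) * a ^ n = 0) :
    ∀ m < M, PowerSeries.coeff m a = PowerSeries.coeff m f := by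
  set c := PowerSeries.constantCoeff f with hc
  set d := a - f with hd
  set H : PowerSeries K := ∑ n ∈ Finset.range (N + 1), (P n : PowerSeries K) *
      ∑ i ∈ Finset.range n, a ^ i * f ^ (n - 1 - i) with hH
  have hHd : ∀ m < M, PowerSeries.coeff m (H * d) = 0 := by
    intro m hm
    have key : H * d = - ∑ n ∈ Finset.range (N + 1), (P n : PowerSeries K) * f ^ n := by
      have h1 : H * d = ∑ n ∈ Finset.range (N + 1),
          (P n : PowerSeries K) * (a ^ n - f ^ n) := by
        rw [hH, Finset.sum_mul]
        refine Finset.sum_congr rfl fun n _ => ?_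
        rw [mul_assoc, geom_sum₂_mul]
      rw [h1]
      have := ha
      simp only [mul_sub, Finset.sum_sub_distrib, ha, zero_sub]
    rw [key, map_neg, horder m hm, neg_zero]
  have hH0 : PowerSeries.constantCoeff H =
      ∑ n ∈ Finset.range (N + 1), (n : K) * (P n).coeff 0 * c ^ (n - 1) := by
    rw [hH, map_sum]
    refine Finset.sum_congr rfl fun n _ => ?_
    rw [map_mul, map_sum]
    have h2 : ∀ i ∈ Finset.range n,
        PowerSeries.constantCoeff (a ^ i * f ^ (n - 1 - i)) = c ^ (n - 1) := by
      intro i hi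
      rw [map_mul, map_pow, map_pow, ha0, ← hc, ← pow_add]
      congr 1
      simp only [Finset.mem_range] at hi
      omega
    rw [Finset.sum_congr rfl h2, Finset.sum_const, Finset.card_range, nsmul_eq_mul]
    rw [Polynomial.constantCoeff_coe]
    ring
  have key : ∀ m, m < M → PowerSeries.coeff m d = 0 := by
    intro m
    induction m using Nat.strong_induction_on with
    | _ m ih =>
      intro hm
      have h4 : PowerSeries.coeff m (H * d) =
          PowerSeries.constantCoeff H * PowerSeries.coeff m d := by
        rw [PowerSeries.coeff_mul]
        rw [Finset.sum_eq_single (0, m)]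
        · simp [PowerSeries.coeff_zero_eq_constantCoeff]
        · intro p hp hne
          simp only [Finset.HasAntidiagonal.mem_antidiagonal] at hp
          have hp2 : p.2 < m := by
            rcases Nat.lt_or_ge p.2 m with h | h
            · exact h
            · exfalso; apply hne
              have : p.2 = m := by omega
              have : p.1 = 0 := by omega
              exact Prod.ext ‹p.1 = 0› ‹p.2 = m›
          rw [ih p.2 hp2 (lt_trans hp2 hm), mul_zero]
        · intro h
          simp at h
      have h5 := hHd m hm
      rw [h4, hH0] at h5
      exact (mul_eq_zero.mp h5).resolve_left hC
  intro m hm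
  have := key m hm
  rw [hd, map_sub, sub_eq_zero] at this
  exact this
end

section
/- Let N ≥ 1, P₀,...,P_N ∈ K[z], and a ∈ K⟦z⟧ with ∑_{n=0}^N P_n aⁿ = 0 and C := ∑_{n=1}^N n P_n(0) a(0)^{n-1} ≠ 0. Then for every J ≥ 1, the coefficient a_J satisfies the recursion a_J = −D_J / C, where D_J is the coefficient of z^J in ∑_{n=0}^N P_n(z) (∑_{j=0}^{J-1} a_j z^j)ⁿ. -/
theorem coefficient_recursion (K : Type*) [Field K] (N : ℕ) (hN : 1 ≤ N)
    (P : ℕ → Polynomial K) (a : PowerSeries K)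
    (ha : ∑ n ∈ Finset.range (N + 1), (P n : PowerSeries K) * a ^ n = 0)
    (C : K)
    (hC : C = ∑ n ∈ Finset.range (N + 1),
      (n : K) * (P n).coeff 0 * (PowerSeries.constantCoeff a) ^ (n - 1))
    (hCne : C ≠ 0) :
    ∀ J, 1 ≤ J → PowerSeries.coeff J a =
      -(PowerSeries.coeff J
        (∑ n ∈ Finset.range (N + 1),
          (P n : PowerSeries K) * ((a.trunc J : Polynomial K) : PowerSeries K) ^ n)) / C := by
  intro J hJ
  set t : PowerSeries K := ((a.trunc J : Polynomial K) : PowerSeries K) with htdef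
  obtain ⟨s, hs⟩ : (PowerSeries.X : PowerSeries K) ^ J ∣ (a - t) := by
    rw [PowerSeries.X_pow_dvd_iff]
    intro m hm
    simp [htdef, Polynomial.coeff_coe, PowerSeries.coeff_trunc, hm]
  have ht0 : PowerSeries.constantCoeff t = PowerSeries.constantCoeff a := by
    have : PowerSeries.coeff 0 t = PowerSeries.coeff 0 a := by
      simp [htdef, Polynomial.coeff_coe, PowerSeries.coeff_trunc,
        Nat.lt_of_lt_of_le Nat.zero_lt_one hJ]
    simpa using this
  have hs0 : PowerSeries.constantCoeff s = PowerSeries.coeff J a := by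
    have htJ : PowerSeries.coeff J t = 0 := by
      simp [htdef, Polynomial.coeff_coe, PowerSeries.coeff_trunc]
    have := congrArg (PowerSeries.coeff J) hs
    rw [map_sub, htJ, sub_zero] at this
    have h2 : PowerSeries.coeff J ((PowerSeries.X : PowerSeries K) ^ J * s)
        = PowerSeries.coeff 0 s := by
      have := PowerSeries.coeff_X_pow_mul s J 0
      simpa using this
    rw [h2] at this
    simpa using this.symm
  set a0 := PowerSeries.constantCoeff a with ha0
  have key : ∀ n, PowerSeries.coeff J ((P n : PowerSeries K) * a ^ n)
      = PowerSeries.coeff J ((P n : PowerSeries K) * t ^ n)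
        + (n : K) * (P n).coeff 0 * a0 ^ (n - 1) * PowerSeries.coeff J a := by
    intro n
    have hgeom : a ^ n - t ^ n
        = (PowerSeries.X : PowerSeries K) ^ J
          * (s * ∑ i ∈ Finset.range n, a ^ i * t ^ (n - 1 - i)) := by
      rw [← geom_sum₂_mul, hs]; ring
    have hdiff : (P n : PowerSeries K) * a ^ n - (P n : PowerSeries K) * t ^ n
        = (PowerSeries.X : PowerSeries K) ^ J
          * ((P n : PowerSeries K) * s * ∑ i ∈ Finset.range n, a ^ i * t ^ (n - 1 - i)) := by
      rw [← mul_sub, hgeom]; ring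
    have hc := congrArg (PowerSeries.coeff J) hdiff
    rw [map_sub] at hc
    have h2 : PowerSeries.coeff J ((PowerSeries.X : PowerSeries K) ^ J
        * ((P n : PowerSeries K) * s * ∑ i ∈ Finset.range n, a ^ i * t ^ (n - 1 - i)))
        = PowerSeries.constantCoeff
          ((P n : PowerSeries K) * s * ∑ i ∈ Finset.range n, a ^ i * t ^ (n - 1 - i)) := by
      have := PowerSeries.coeff_X_pow_mul
        ((P n : PowerSeries K) * s * ∑ i ∈ Finset.range n, a ^ i * t ^ (n - 1 - i)) J 0
      simpa using this
    have hS : PowerSeries.constantCoeff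
        (∑ i ∈ Finset.range n, a ^ i * t ^ (n - 1 - i)) = (n : K) * a0 ^ (n - 1) := by
      rw [map_sum]
      have : ∀ i ∈ Finset.range n,
          PowerSeries.constantCoeff (a ^ i * t ^ (n - 1 - i)) = a0 ^ (n - 1) := by
        intro i hi
        have hi' := Finset.mem_range.mp hi
        rw [map_mul, map_pow, map_pow, ht0, ← ha0, ← pow_add]
        congr 1
        omega
      rw [Finset.sum_congr rfl this, Finset.sum_const, Finset.card_range, nsmul_eq_mul]
    have hP0 : PowerSeries.constantCoeff ((P n : PowerSeries K)) = (P n).coeff 0 := by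
      simp [← PowerSeries.coeff_zero_eq_constantCoeff, Polynomial.coeff_coe]
    have hCC : PowerSeries.constantCoeff
        ((P n : PowerSeries K) * s * ∑ i ∈ Finset.range n, a ^ i * t ^ (n - 1 - i))
        = (P n).coeff 0 * PowerSeries.coeff J a * ((n : K) * a0 ^ (n - 1)) := by
      rw [map_mul, map_mul, hS, hs0, hP0]
    rw [h2, hCC] at hc
    linear_combination hc
  have hsum := congrArg (PowerSeries.coeff J) ha
  rw [map_sum, map_zero] at hsum
  rw [Finset.sum_congr rfl (fun n _ => key n)] at hsum
  rw [Finset.sum_add_distrib, ← Finset.sum_mul] at hsum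
  rw [map_sum]
  rw [← hC] at hsum
  rw [eq_div_iff hCne]
  linear_combination hsum
end

section
/- Let P₁, P₂ be polynomials over K with coefficients p_{1,0}, p_{1,1} and p_{2,0}, p_{2,1} (degree ≤ 1), and let a ∈ K⟦z⟧ satisfy P₀ + P₁ a + P₂ a² = 0 where deg P₀ ≤ 1. Assume p_{1,0} + 2 p_{2,0} a₀ ≠ 0. Then for every J ≥ 2, a_J = −( p_{1,1} a_{J−1} + p_{2,1} ∑_{k=0}^{J−1} a_{J−1−k} a_k + p_{2,0} ∑_{k=1}^{J−1} a_k a_{J−k} ) / ( p_{1,0} + 2 p_{2,0} a₀ ). -/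
lemma coeff_poly_mul_aux (K : Type*) [Field K] (P : Polynomial K) (hP : P.natDegree ≤ 1)
    (f : PowerSeries K) (J : ℕ) (hJ : 1 ≤ J) :
    PowerSeries.coeff J ((P : PowerSeries K) * f) =
      P.coeff 0 * PowerSeries.coeff J f + P.coeff 1 * PowerSeries.coeff (J - 1) f := by
  rw [PowerSeries.coeff_mul, Finset.Nat.sum_antidiagonal_eq_sum_range_succ_mk]
  have h : ∑ i ∈ Finset.range (J + 1),
      PowerSeries.coeff i (P : PowerSeries K) * PowerSeries.coeff (J - i) f =
      ∑ i ∈ Finset.range 2,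
      PowerSeries.coeff i (P : PowerSeries K) * PowerSeries.coeff (J - i) f := by
    symm
    apply Finset.sum_subset
    · intro x hx
      simp only [Finset.mem_range] at *
      omega
    · intro x hx hx2
      simp only [Finset.mem_range] at *
      have : P.coeff x = 0 := Polynomial.coeff_eq_zero_of_natDegree_lt (by omega)
      rw [Polynomial.coeff_coe, this, zero_mul]
  rw [h]
  simp [Finset.sum_range_succ, Polynomial.coeff_coe]

theorem quadratic_recursion (K : Type*) [Field K]
    (P₀ P₁ P₂ : Polynomial K)
    (h0 : P₀.natDegree ≤ 1) (h1 : P₁.natDegree ≤ 1) (h2 : P₂.natDegree ≤ 1)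
    (a : PowerSeries K)
    (ha : (P₀ : PowerSeries K) + (P₁ : PowerSeries K) * a + (P₂ : PowerSeries K) * a ^ 2 = 0)
    (hden : P₁.coeff 0 + 2 * P₂.coeff 0 * PowerSeries.coeff 0 a ≠ 0) :
    ∀ J, 2 ≤ J → PowerSeries.coeff J a =
      -(P₁.coeff 1 * PowerSeries.coeff (J - 1) a +
          P₂.coeff 1 * ∑ k ∈ Finset.range J,
            PowerSeries.coeff (J - 1 - k) a * PowerSeries.coeff k a +
          P₂.coeff 0 * ∑ k ∈ Finset.Icc 1 (J - 1),
            PowerSeries.coeff k a * PowerSeries.coeff (J - k) a) /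
        (P₁.coeff 0 + 2 * P₂.coeff 0 * PowerSeries.coeff 0 a) := by
  intro J hJ
  set c : ℕ → K := fun n => PowerSeries.coeff n a with hc
  have key : (PowerSeries.coeff J)
      ((P₀ : PowerSeries K) + (P₁ : PowerSeries K) * a + (P₂ : PowerSeries K) * a ^ 2) = 0 := by
    rw [ha]; simp
  rw [map_add, map_add] at key
  have hP0 : (PowerSeries.coeff J) (P₀ : PowerSeries K) = 0 := by
    rw [Polynomial.coeff_coe]
    exact Polynomial.coeff_eq_zero_of_natDegree_lt (by omega)
  rw [hP0, zero_add, coeff_poly_mul_aux K P₁ h1 a J (by omega),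
    coeff_poly_mul_aux K P₂ h2 (a ^ 2) J (by omega)] at key
  -- coefficients of a^2
  have hsq : ∀ n : ℕ, PowerSeries.coeff n (a ^ 2) =
      ∑ k ∈ Finset.range (n + 1), c k * c (n - k) := by
    intro n
    rw [sq, PowerSeries.coeff_mul, Finset.Nat.sum_antidiagonal_eq_sum_range_succ_mk]
  -- coeff (J-1) of a^2 equals first sum in statement
  have hS1 : PowerSeries.coeff (J - 1) (a ^ 2) =
      ∑ k ∈ Finset.range J, c (J - 1 - k) * c k := by
    rw [hsq]
    have : J - 1 + 1 = J := by omega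
    rw [this]
    exact Finset.sum_congr rfl fun k _ => mul_comm _ _
  -- coeff J of a^2 : split off k = 0 and k = J
  have hS2 : PowerSeries.coeff J (a ^ 2) =
      2 * c 0 * c J + ∑ k ∈ Finset.Icc 1 (J - 1), c k * c (J - k) := by
    rw [hsq]
    have hJ' : J + 1 = (J - 1) + 1 + 1 := by omega
    rw [hJ', Finset.sum_range_succ, Finset.sum_range_succ']
    have e1 : J - 1 + 1 = J := by omega
    have hIcc : ∑ k ∈ Finset.Icc 1 (J - 1), c k * c (J - k) =
        ∑ i ∈ Finset.range (J - 1), c (1 + i) * c (J - (1 + i)) := by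
      rw [← Finset.Ico_add_one_right_eq_Icc, show J - 1 + 1 = J by omega, Finset.sum_Ico_eq_sum_range]
    rw [hIcc, e1]
    have : ∀ i, c (1 + i) * c (J - (1 + i)) = c (i + 1) * c (J - (i + 1)) := by
      intro i; rw [add_comm 1 i]
    simp only [this]
    have hz : J - J = 0 := by omega
    have hz2 : J - 0 = J := by omega
    rw [hz, hz2]
    ring
  rw [hS1, hS2] at key
  simp only [hc] at key ⊢
  rw [eq_div_iff hden]
  linear_combination key
end

section
/- Let a, b ∈ K⟦z⟧ both satisfy ∑_{n=0}^N P_n aⁿ = 0 and ∑_{n=0}^N P_n bⁿ = 0 with a(0) = b(0) = f₀, where C := ∑_{n=1}^N n P_n(0) f₀^{n-1} ≠ 0. Then a = b. -/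
theorem root_uniqueness (K : Type*) [Field K] (N : ℕ)
    (P : ℕ → Polynomial K) (f₀ : K) (a b : PowerSeries K)
    (ha : ∑ n ∈ Finset.range (N + 1), (P n : PowerSeries K) * a ^ n = 0)
    (hb : ∑ n ∈ Finset.range (N + 1), (P n : PowerSeries K) * b ^ n = 0)
    (ha0 : PowerSeries.constantCoeff a = f₀)
    (hb0 : PowerSeries.constantCoeff b = f₀)
    (hC : ∑ n ∈ Finset.range (N + 1), (n : K) * (P n).coeff 0 * f₀ ^ (n - 1) ≠ 0) :
    a = b := by
  set G : PowerSeries K :=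
    ∑ n ∈ Finset.range (N + 1), (P n : PowerSeries K) *
      ∑ i ∈ Finset.range n, a ^ i * b ^ (n - 1 - i) with hG
  have hfac : G * (a - b) = 0 := by
    have : G * (a - b)
        = ∑ n ∈ Finset.range (N + 1), (P n : PowerSeries K) * (a ^ n - b ^ n) := by
      rw [hG, Finset.sum_mul]
      refine Finset.sum_congr rfl fun n _ => ?_
      rw [mul_assoc, geom_sum₂_mul]
    rw [this]
    simp only [mul_sub]
    rw [Finset.sum_sub_distrib, ha, hb, sub_zero]
  have hGc : PowerSeries.constantCoeff G
      = ∑ n ∈ Finset.range (N + 1), (n : K) * (P n).coeff 0 * f₀ ^ (n - 1) := by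
    rw [hG, map_sum]
    refine Finset.sum_congr rfl fun n _ => ?_
    rw [map_mul, map_sum]
    have h1 : (PowerSeries.constantCoeff) (P n : PowerSeries K) = (P n).coeff 0 := by
      simp [PowerSeries.constantCoeff, ← Polynomial.coeff_coe]
    have h2 : ∀ i ∈ Finset.range n,
        (PowerSeries.constantCoeff) (a ^ i * b ^ (n - 1 - i)) = f₀ ^ (n - 1) := by
      intro i hi
      rw [map_mul, map_pow, map_pow, ha0, hb0, ← pow_add]
      congr 1
      have := Finset.mem_range.mp hi
      omega
    rw [Finset.sum_congr rfl h2, Finset.sum_const, Finset.card_range, h1,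
      nsmul_eq_mul]
    ring
  have hGne : G ≠ 0 := fun h => hC (by rw [← hGc, h, map_zero])
  have := mul_eq_zero.mp hfac
  rcases this with h | h
  · exact absurd h hGne
  · exact sub_eq_zero.mp h
end

section
/- Let P₀, P₁, P₂ be polynomials of degree ≤ 1 with coefficients p_{n,j}, and let f ∈ K⟦z⟧ with coefficients f_j satisfy P₀ + P₁ f + P₂ f² ≡ 0 mod z⁵ and p_{1,0} + 2 p_{2,0} f₀ ≠ 0. Let a be the power series root of P₀ + P₁ Y + P₂ Y² = 0 with a(0) = f₀. Then a_5 = −( p_{1,1} f₄ + p_{2,1}(2 f₀ f₄ + 2 f₁ f₃ + f₂²) + p_{2,0}(2 f₁ f₄ + 2 f₂ f₃) ) / ( p_{1,0} + 2 p_{2,0} f₀ ). -/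
theorem example1_a5 (K : Type*) [Field K]
    (P₀ P₁ P₂ : Polynomial K)
    (h0 : P₀.natDegree ≤ 1) (h1 : P₁.natDegree ≤ 1) (h2 : P₂.natDegree ≤ 1)
    (f : PowerSeries K)
    (horder : ∀ m < 5, PowerSeries.coeff m
      ((P₀ : PowerSeries K) + (P₁ : PowerSeries K) * f + (P₂ : PowerSeries K) * f ^ 2) = 0)
    (hden : P₁.coeff 0 + 2 * P₂.coeff 0 * PowerSeries.coeff 0 f ≠ 0)
    (a : PowerSeries K)
    (ha0 : PowerSeries.constantCoeff a = PowerSeries.coeff 0 f)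
    (ha : (P₀ : PowerSeries K) + (P₁ : PowerSeries K) * a + (P₂ : PowerSeries K) * a ^ 2 = 0) :
    PowerSeries.coeff 5 a =
      -(P₁.coeff 1 * PowerSeries.coeff 4 f +
          P₂.coeff 1 * (2 * PowerSeries.coeff 0 f * PowerSeries.coeff 4 f +
            2 * PowerSeries.coeff 1 f * PowerSeries.coeff 3 f +
            (PowerSeries.coeff 2 f) ^ 2) +
          P₂.coeff 0 * (2 * PowerSeries.coeff 1 f * PowerSeries.coeff 4 f +
            2 * PowerSeries.coeff 2 f * PowerSeries.coeff 3 f)) /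
        (P₁.coeff 0 + 2 * P₂.coeff 0 * PowerSeries.coeff 0 f) := by
  have z0 : ∀ i, 2 ≤ i → P₀.coeff i = 0 := fun i hi =>
    Polynomial.coeff_eq_zero_of_natDegree_lt (lt_of_lt_of_le (by omega : P₀.natDegree < 2) hi)
  have z1 : ∀ i, 2 ≤ i → P₁.coeff i = 0 := fun i hi =>
    Polynomial.coeff_eq_zero_of_natDegree_lt (lt_of_lt_of_le (by omega : P₁.natDegree < 2) hi)
  have z2 : ∀ i, 2 ≤ i → P₂.coeff i = 0 := fun i hi =>
    Polynomial.coeff_eq_zero_of_natDegree_lt (lt_of_lt_of_le (by omega : P₂.natDegree < 2) hi)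
  have hA0 : PowerSeries.constantCoeff a = PowerSeries.constantCoeff f := by
    simpa using ha0
  have hden' : P₁.coeff 0 + 2 * P₂.coeff 0 * PowerSeries.constantCoeff f ≠ 0 := by
    simpa using hden
  have hh1 := horder 1 (by norm_num)
  have hh2 := horder 2 (by norm_num)
  have hh3 := horder 3 (by norm_num)
  have hh4 := horder 4 (by norm_num)
  have e1 : PowerSeries.coeff 1 ((P₀ : PowerSeries K) + (P₁ : PowerSeries K) * a + (P₂ : PowerSeries K) * a ^ 2) = 0 := by rw [ha]; simp
  have e2 : PowerSeries.coeff 2 ((P₀ : PowerSeries K) + (P₁ : PowerSeries K) * a + (P₂ : PowerSeries K) * a ^ 2) = 0 := by rw [ha]; simp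
  have e3 : PowerSeries.coeff 3 ((P₀ : PowerSeries K) + (P₁ : PowerSeries K) * a + (P₂ : PowerSeries K) * a ^ 2) = 0 := by rw [ha]; simp
  have e4 : PowerSeries.coeff 4 ((P₀ : PowerSeries K) + (P₁ : PowerSeries K) * a + (P₂ : PowerSeries K) * a ^ 2) = 0 := by rw [ha]; simp
  have e5 : PowerSeries.coeff 5 ((P₀ : PowerSeries K) + (P₁ : PowerSeries K) * a + (P₂ : PowerSeries K) * a ^ 2) = 0 := by rw [ha]; simp
  simp only [map_add, PowerSeries.coeff_mul, pow_two,
    Finset.Nat.sum_antidiagonal_eq_sum_range_succ_mk, Finset.sum_range_succ,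
    Finset.sum_range_zero, Polynomial.coeff_coe, zero_add,
    z0 2 (by norm_num), z0 3 (by norm_num), z0 4 (by norm_num), z0 5 (by norm_num),
    z1 2 (by norm_num), z1 3 (by norm_num), z1 4 (by norm_num), z1 5 (by norm_num),
    z2 2 (by norm_num), z2 3 (by norm_num), z2 4 (by norm_num), z2 5 (by norm_num)]
    at hh1 hh2 hh3 hh4 e1 e2 e3 e4 e5
  norm_num at hh1 hh2 hh3 hh4 e1 e2 e3 e4 e5
  rw [hA0] at e1 e2 e3 e4 e5
  have q1 : PowerSeries.coeff 1 a = PowerSeries.coeff 1 f := by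
    have key : (P₁.coeff 0 + 2 * P₂.coeff 0 * PowerSeries.constantCoeff f) *
        (PowerSeries.coeff 1 a - PowerSeries.coeff 1 f) = 0 := by
      linear_combination e1 - hh1
    exact sub_eq_zero.mp ((mul_eq_zero.mp key).resolve_left hden')
  rw [q1] at e2 e3 e4 e5
  have q2 : PowerSeries.coeff 2 a = PowerSeries.coeff 2 f := by
    have key : (P₁.coeff 0 + 2 * P₂.coeff 0 * PowerSeries.constantCoeff f) *
        (PowerSeries.coeff 2 a - PowerSeries.coeff 2 f) = 0 := by
      linear_combination e2 - hh2
    exact sub_eq_zero.mp ((mul_eq_zero.mp key).resolve_left hden')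
  rw [q2] at e3 e4 e5
  have q3 : PowerSeries.coeff 3 a = PowerSeries.coeff 3 f := by
    have key : (P₁.coeff 0 + 2 * P₂.coeff 0 * PowerSeries.constantCoeff f) *
        (PowerSeries.coeff 3 a - PowerSeries.coeff 3 f) = 0 := by
      linear_combination e3 - hh3
    exact sub_eq_zero.mp ((mul_eq_zero.mp key).resolve_left hden')
  rw [q3] at e4 e5
  have q4 : PowerSeries.coeff 4 a = PowerSeries.coeff 4 f := by
    have key : (P₁.coeff 0 + 2 * P₂.coeff 0 * PowerSeries.constantCoeff f) *
        (PowerSeries.coeff 4 a - PowerSeries.coeff 4 f) = 0 := by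
      linear_combination e4 - hh4
    exact sub_eq_zero.mp ((mul_eq_zero.mp key).resolve_left hden')
  rw [q4] at e5
  rw [show PowerSeries.coeff 0 f = PowerSeries.constantCoeff f from by simp] at hden ⊢
  rw [eq_div_iff hden]
  linear_combination e5
end

section
/- Let a ∈ K⟦z⟧ and P₀,...,P_N ∈ K[z]. For any J ≥ 1, the coefficient of z^J in ∑_{n=0}^N P_n aⁿ minus the coefficient of z^J in ∑_{n=0}^N P_n (∑_{j=0}^{J-1} a_j z^j)ⁿ equals a_J · ∑_{n=1}^N n P_n(0) a₀^{n-1}. -/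
lemma coeff_mul_of_lt_zero {K : Type*} [CommRing K] (J : ℕ) (X Y : PowerSeries K)
    (h : ∀ k < J, PowerSeries.coeff (R := K) k Y = 0) :
    PowerSeries.coeff (R := K) J (X * Y) =
      PowerSeries.constantCoeff (R := K) X * PowerSeries.coeff (R := K) J Y := by
  rw [PowerSeries.coeff_mul]
  rw [Finset.sum_eq_single (0, J)]
  · simp [PowerSeries.coeff_zero_eq_constantCoeff]
  · rintro ⟨i, j⟩ hmem hne
    rw [Finset.HasAntidiagonal.mem_antidiagonal] at hmem
    have hj : j < J := by
      rcases Nat.lt_or_ge j J with h' | h'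
      · exact h'
      · exfalso; apply hne
        have : j = J := le_antisymm (hmem ▸ Nat.le_add_left j i) h'
        subst this
        have : i = 0 := by omega
        simp [this]
    rw [h j hj, mul_zero]
  · intro h'
    exact absurd (Finset.HasAntidiagonal.mem_antidiagonal.mpr (by simp)) h'

theorem key_lemma (K : Type*) [CommRing K] (N : ℕ)
    (P : ℕ → Polynomial K) (a : PowerSeries K) (J : ℕ) (hJ : 1 ≤ J) :
    PowerSeries.coeff (R := K) J (∑ n ∈ Finset.range (N + 1), (P n : PowerSeries K) * a ^ n) -
      PowerSeries.coeff (R := K) J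
        (∑ n ∈ Finset.range (N + 1),
          (P n : PowerSeries K) * ((a.trunc J : Polynomial K) : PowerSeries K) ^ n) =
      PowerSeries.coeff (R := K) J a *
        ∑ n ∈ Finset.range (N + 1),
          (n : K) * (P n).coeff 0 * (PowerSeries.coeff (R := K) 0 a) ^ (n - 1) := by
  set T : PowerSeries K := ((a.trunc J : Polynomial K) : PowerSeries K) with hT
  have hTk : ∀ k < J, PowerSeries.coeff (R := K) k T = PowerSeries.coeff (R := K) k a := by
    intro k hk
    simp [hT, Polynomial.coeff_coe, PowerSeries.coeff_trunc, hk]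
  have hTJ : PowerSeries.coeff (R := K) J T = 0 := by
    simp [hT, Polynomial.coeff_coe, PowerSeries.coeff_trunc]
  have hT0 : PowerSeries.constantCoeff (R := K) T = PowerSeries.coeff (R := K) 0 a := by
    rw [← PowerSeries.coeff_zero_eq_constantCoeff]
    exact hTk 0 hJ
  rw [map_sum, map_sum, ← Finset.sum_sub_distrib, Finset.mul_sum]
  apply Finset.sum_congr rfl
  intro n _
  rw [← map_sub, ← mul_sub]
  rw [← geom_sum₂_mul, ← mul_assoc]
  rw [coeff_mul_of_lt_zero J _ _ (by intro k hk; simp [hTk k hk])]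
  rw [map_sub, hTJ, sub_zero]
  rw [map_mul]
  have hc : PowerSeries.constantCoeff (R := K) (∑ i ∈ Finset.range n, a ^ i * T ^ (n - 1 - i)) =
      (n : K) * (PowerSeries.coeff (R := K) 0 a) ^ (n - 1) := by
    rw [map_sum]
    have : ∀ i ∈ Finset.range n,
        PowerSeries.constantCoeff (R := K) (a ^ i * T ^ (n - 1 - i)) =
          (PowerSeries.coeff (R := K) 0 a) ^ (n - 1) := by
      intro i hi
      rw [Finset.mem_range] at hi
      simp only [map_mul, map_pow, hT0, PowerSeries.coeff_zero_eq_constantCoeff, ← pow_add]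
      congr 1
      omega
    rw [Finset.sum_congr rfl this, Finset.sum_const, Finset.card_range, nsmul_eq_mul]
  rw [hc, Polynomial.constantCoeff_coe]
  ring
end

section
/- Let N ≥ 1, P₀,...,P_N ∈ K[z] with C := ∑_{n=1}^N n P_n(0) f₀^{n-1} ≠ 0 and ∑_{n=0}^N P_n(0) f₀ⁿ = 0. Define the sequence (a_J) by a₀ = f₀ and, for J ≥ 1, a_J = −D_J/C where D_J is the coefficient of z^J in ∑_{n=0}^N P_n (∑_{j=0}^{J-1} a_j z^j)ⁿ. Then the power series a = ∑ a_J z^J satisfies ∑_{n=0}^N P_n aⁿ = 0. -/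
open PowerSeries Finset

theorem recursion_correctness (K : Type*) [Field K] (N : ℕ) (hN : 1 ≤ N)
    (P : ℕ → Polynomial K) (f₀ : K) (C : K)
    (hC : C = ∑ n ∈ Finset.range (N + 1), (n : K) * (P n).coeff 0 * f₀ ^ (n - 1))
    (hCne : C ≠ 0)
    (hroot : ∑ n ∈ Finset.range (N + 1), (P n).coeff 0 * f₀ ^ n = 0)
    (a : ℕ → K) (ha0 : a 0 = f₀)
    (harec : ∀ J, 1 ≤ J → a J =
      -(PowerSeries.coeff J
          (∑ n ∈ Finset.range (N + 1), (P n : PowerSeries K) *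
            ((∑ j ∈ Finset.range J, Polynomial.C (a j) * Polynomial.X ^ j :
              Polynomial K) : PowerSeries K) ^ n)) / C) :
    ∑ n ∈ Finset.range (N + 1), (P n : PowerSeries K) * (PowerSeries.mk a) ^ n = 0 := by
  have key : ∀ J, PowerSeries.coeff J
      (∑ n ∈ Finset.range (N + 1), (P n : PowerSeries K) * (PowerSeries.mk a) ^ n) = 0 := by
    intro J
    rcases Nat.eq_zero_or_pos J with hJ | hJ
    · subst hJ
      simp only [coeff_zero_eq_constantCoeff, map_sum, map_mul, map_pow,
        Polynomial.constantCoeff_coe, constantCoeff_mk, ha0]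
      exact hroot
    · -- J ≥ 1
      set T : Polynomial K := ∑ j ∈ Finset.range J, Polynomial.C (a j) * Polynomial.X ^ j with hT
      set t : PowerSeries K := (T : PowerSeries K) with ht
      set B : PowerSeries K := PowerSeries.mk (fun k => a (J + k)) with hB
      have hA : PowerSeries.mk a = t + X ^ J * B := by
        ext i
        rw [map_add, coeff_X_pow_mul']
        simp only [coeff_mk, ht, Polynomial.coeff_coe, hT, Polynomial.finset_sum_coeff,
          Polynomial.coeff_C_mul, Polynomial.coeff_X_pow, hB]
        split_ifs with h
        · rw [Finset.sum_eq_zero fun j hj => by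
            rw [if_neg, mul_zero]
            exact fun e => absurd (e ▸ Finset.mem_range.mp hj) (not_lt.mpr h),
            zero_add, Nat.add_sub_cancel' h]
        · push_neg at h
          rw [Finset.sum_eq_single i, if_pos rfl, mul_one, add_zero]
          · intro j _ hj; rw [if_neg (Ne.symm hj), mul_zero]
          · intro hi; exact absurd (Finset.mem_range.mpr h) hi
      have hct : PowerSeries.constantCoeff t = f₀ := by
        rw [ht, Polynomial.constantCoeff_coe, hT, Polynomial.finset_sum_coeff]
        rw [Finset.sum_eq_single 0]
        · simp [ha0]
        · intro j _ hj
          simp [Polynomial.coeff_X_pow, Ne.symm hj]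
        · intro h; exact absurd (Finset.mem_range.mpr hJ) h
      have hcB : PowerSeries.constantCoeff B = a J := by simp [hB]
      have hAn : ∀ n, PowerSeries.coeff J ((P n : PowerSeries K) * (PowerSeries.mk a) ^ n)
          = PowerSeries.coeff J ((P n : PowerSeries K) * t ^ n)
            + (n : K) * (P n).coeff 0 * f₀ ^ (n - 1) * a J := by
        intro n
        rw [hA, add_pow, Finset.mul_sum, map_sum]
        have hsplit : ∀ k ∈ Finset.range (n + 1),
            PowerSeries.coeff J ((P n : PowerSeries K) *
              (t ^ k * (X ^ J * B) ^ (n - k) * (n.choose k : PowerSeries K)))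
            = if k = n then PowerSeries.coeff J ((P n : PowerSeries K) * t ^ n)
              else if k = n - 1 then (n : K) * (P n).coeff 0 * f₀ ^ (n - 1) * a J
              else 0 := by
          intro k hk
          rw [Finset.mem_range] at hk
          by_cases hkn : k = n
          · subst hkn
            simp
          · rw [if_neg hkn]
            by_cases hk1 : k = n - 1
            · have hn1 : 1 ≤ n := by omega
              have hnk : n - k = 1 := by omega
              rw [if_pos hk1, hnk, pow_one]
              have heq : (P n : PowerSeries K) * (t ^ k * (X ^ J * B) * (n.choose k : PowerSeries K))
                  = X ^ J * ((P n : PowerSeries K) * t ^ k * B * (n.choose k : PowerSeries K)) := by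
                ring
              rw [heq]
              have h0 := PowerSeries.coeff_X_pow_mul
                ((P n : PowerSeries K) * t ^ k * B * (n.choose k : PowerSeries K)) J 0
              rw [zero_add] at h0
              rw [h0, coeff_zero_eq_constantCoeff, map_mul, map_mul, map_mul, map_pow,
                Polynomial.constantCoeff_coe, hct, hcB]
              have hch : n.choose k = n := by rw [hk1, Nat.choose_symm hn1, Nat.choose_one_right]
              have hcc : PowerSeries.constantCoeff (n.choose k : PowerSeries K) = (n : K) := by
                rw [hch]; simp
              rw [hcc, hk1]
              ring
            · rw [if_neg hk1]
              have h2 : 2 ≤ n - k := by omega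
              have hdvd : (X : PowerSeries K) ^ (J * (n - k)) ∣
                  (P n : PowerSeries K) * (t ^ k * (X ^ J * B) ^ (n - k) * (n.choose k : PowerSeries K)) := by
                exact ⟨(P n : PowerSeries K) * t ^ k * B ^ (n - k) *
                  (n.choose k : PowerSeries K), by rw [mul_pow, ← pow_mul]; ring⟩
              rw [PowerSeries.X_pow_dvd_iff] at hdvd
              exact hdvd J (by nlinarith)
        rw [Finset.sum_congr rfl hsplit, Finset.sum_range_succ, if_pos rfl]
        have hrest : ∀ k ∈ Finset.range n,
            (if k = n then PowerSeries.coeff J ((P n : PowerSeries K) * t ^ n)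
              else if k = n - 1 then (n : K) * (P n).coeff 0 * f₀ ^ (n - 1) * a J
              else 0)
            = if k = n - 1 then (n : K) * (P n).coeff 0 * f₀ ^ (n - 1) * a J else 0 := by
          intro k hk
          rw [Finset.mem_range] at hk
          rw [if_neg (by omega)]
        rw [Finset.sum_congr rfl hrest, Finset.sum_ite_eq' (Finset.range n) (n - 1)]
        rcases Nat.eq_zero_or_pos n with hn | hn
        · subst hn; simp
        · rw [if_pos (Finset.mem_range.mpr (by omega)), add_comm]
      rw [map_sum, Finset.sum_congr rfl (fun n _ => hAn n), Finset.sum_add_distrib]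
      have hsum2 : ∑ n ∈ Finset.range (N + 1), (n : K) * (P n).coeff 0 * f₀ ^ (n - 1) * a J
          = C * a J := by
        rw [hC, Finset.sum_mul]
      have hDJ := harec J hJ
      rw [← hT, ← ht] at hDJ
      have hD : C * a J = -(∑ n ∈ Finset.range (N + 1),
          PowerSeries.coeff J ((P n : PowerSeries K) * t ^ n)) := by
        rw [hDJ, map_sum]
        field_simp
      rw [hsum2, hD, add_neg_cancel]
  ext J
  rw [key J, map_zero]
end
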